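/- Let F be twice differentiable on an open interval containing [a,b] with a < b, F'' integrable, and suppose |F''| is convex on [a,b] (i.e., (h-s)₂-convex with h(t)=t, s=1). Then |(F'(a)+F'(b))/2 − (1/(b-a))·∫ₐᵇ F'(x) dx| ≤ (b-a)·(|F''(a)|+|F''(b)|)/8. -/

import Mathlib

open Set intervalIntegral

lemma poly_int (a b p q r : ℝ) :
    ∫ x in a..b, (p*x^2 + q*x + r) =
      p*(b^3 - a^3)/3 + q*(b^2 - a^2)/2 + r*(b - a) := by
  have h1 : ∫ x in a..b, (p*x^2 + q*x + r) =
      (∫ x in a..b, p*x^2) + (∫ x in a..b, q*x) + (∫ x in a..b, (r:ℝ)) := by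
    rw [intervalIntegral.integral_add, intervalIntegral.integral_add] <;>
      apply Continuous.intervalIntegrable <;> continuity
  rw [h1, intervalIntegral.integral_const_mul, intervalIntegral.integral_const_mul,
    integral_pow, integral_id, intervalIntegral.integral_const]
  push_cast [smul_eq_mul]; ring

lemma key_int (a b A B : ℝ) (hab : a < b) :
    ∫ x in a..b, |x - (a+b)/2| * ((b - x)*A + (x - a)*B) =
      (b - a)^3 * (A + B) / 8 := by
  set c := (a+b)/2 with hc
  have hac : a ≤ c := by rw [hc]; linarith
  have hcb : c ≤ b := by rw [hc]; linarith
  have hsplit : (∫ x in a..c, |x - c| * ((b - x)*A + (x - a)*B)) +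
      (∫ x in c..b, |x - c| * ((b - x)*A + (x - a)*B)) =
      ∫ x in a..b, |x - c| * ((b - x)*A + (x - a)*B) := by
    apply intervalIntegral.integral_add_adjacent_intervals <;>
      apply Continuous.intervalIntegrable <;> fun_prop
  rw [← hsplit]
  have h1 : (∫ x in a..c, |x - c| * ((b - x)*A + (x - a)*B)) =
      ∫ x in a..c, ((A - B)*x^2 + (-(A*(b+c)) + B*(c+a))*x + (A*b*c - B*a*c)) := by
    apply intervalIntegral.integral_congr
    intro x hx
    rw [uIcc_of_le hac] at hx
    have : |x - c| = c - x := by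
      rw [abs_of_nonpos (by linarith [hx.2])]; ring
    dsimp only; rw [this]; ring
  have h2 : (∫ x in c..b, |x - c| * ((b - x)*A + (x - a)*B)) =
      ∫ x in c..b, (-((A - B)*x^2 + (-(A*(b+c)) + B*(c+a))*x + (A*b*c - B*a*c))) := by
    apply intervalIntegral.integral_congr
    intro x hx
    rw [uIcc_of_le hcb] at hx
    have : |x - c| = x - c := abs_of_nonneg (by linarith [hx.1])
    dsimp only; rw [this]; ring
  rw [h1, h2, intervalIntegral.integral_neg, poly_int, poly_int, hc]
  ring

theorem trapezoid_ineq_convex (F F' F'' : ℝ → ℝ) (I : Set ℝ) (a b : ℝ)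
    (hI : IsOpen I) (hab : a < b) (hsub : Icc a b ⊆ I)
    (hF' : ∀ x ∈ I, HasDerivAt F (F' x) x)
    (hF'' : ∀ x ∈ I, HasDerivAt F' (F'' x) x)
    (hint : IntervalIntegrable F'' MeasureTheory.volume a b)
    (hconv : ∀ t ∈ Icc (0:ℝ) 1,
      |F'' (t * a + (1 - t) * b)| ≤ t * |F'' a| + (1 - t) * |F'' b|) :
    |(F' a + F' b) / 2 - (1 / (b - a)) * ∫ x in a..b, F' x| ≤
      (b - a) * (|F'' a| + |F'' b|) / 8 := by
  have hle : a ≤ b := hab.le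
  have hba : (0:ℝ) < b - a := by linarith
  set c := (a+b)/2 with hc
  have huIcc : Set.uIcc a b = Icc a b := uIcc_of_le hle
  -- F' is interval integrable
  have hF'cont : ContinuousOn F' (Icc a b) := fun x hx =>
    ((hF'' x (hsub hx)).continuousAt).continuousWithinAt
  have hF'int : IntervalIntegrable F' MeasureTheory.volume a b := by
    have h := hF'cont; rw [← huIcc] at h; exact h.intervalIntegrable
  -- integration by parts
  have hu : ∀ x ∈ Set.uIcc a b, HasDerivAt (fun x => x - c) ((fun _ => (1:ℝ)) x) x := by
    intro x _
    simpa using (hasDerivAt_id x).sub_const c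
  have hv : ∀ x ∈ Set.uIcc a b, HasDerivAt F' (F'' x) x := fun x hx =>
    hF'' x (hsub (huIcc ▸ hx))
  have hparts := intervalIntegral.integral_mul_deriv_eq_deriv_mul hu hv
    ((continuous_const).intervalIntegrable a b) hint
  simp only [one_mul] at hparts
  -- rewrite LHS
  have hkey : (F' a + F' b) / 2 - (1 / (b - a)) * ∫ x in a..b, F' x =
      (1/(b-a)) * ∫ x in a..b, (x - c) * F'' x := by
    rw [hparts, hc]
    field_simp
    ring
  rw [hkey, abs_mul]
  have hg : IntervalIntegrable (fun x => |x - c| * ((b - x)*|F'' a| + (x - a)*|F'' b|) / (b-a))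
      MeasureTheory.volume a b := by
    apply Continuous.intervalIntegrable; fun_prop
  have hbd : |∫ x in a..b, (x - c) * F'' x| ≤
      |∫ x in a..b, |x - c| * ((b - x)*|F'' a| + (x - a)*|F'' b|) / (b-a)| := by
    rw [← Real.norm_eq_abs (∫ x in a..b, (x - c) * F'' x)]
    apply intervalIntegral.norm_integral_le_abs_of_norm_le _ hg
    rw [MeasureTheory.ae_restrict_iff' measurableSet_uIoc]
    filter_upwards with x hx
    rw [uIoc_of_le hle] at hx
    have hxa : a < x := hx.1
    have hxb : x ≤ b := hx.2
    set t := (b - x)/(b - a) with ht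
    have ht0 : 0 ≤ t := div_nonneg (by linarith) hba.le
    have ht1 : t ≤ 1 := by rw [ht]; rw [div_le_one hba]; linarith
    have hx_eq : t * a + (1 - t) * b = x := by
      rw [ht]; field_simp; try ring
    have hcv := hconv t ⟨ht0, ht1⟩
    rw [hx_eq] at hcv
    have h1t : 1 - t = (x - a)/(b - a) := by rw [ht]; field_simp; try ring
    rw [Real.norm_eq_abs, abs_mul]
    calc |x - c| * |F'' x| ≤ |x - c| * (t * |F'' a| + (1 - t) * |F'' b|) := by
          exact mul_le_mul_of_nonneg_left hcv (abs_nonneg _)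
      _ = |x - c| * ((b - x)*|F'' a| + (x - a)*|F'' b|) / (b-a) := by
          rw [ht, h1t]; field_simp; try ring
  calc |1/(b-a)| * |∫ x in a..b, (x - c) * F'' x| ≤
      |1/(b-a)| * |∫ x in a..b, |x - c| * ((b - x)*|F'' a| + (x - a)*|F'' b|) / (b-a)| :=
        mul_le_mul_of_nonneg_left hbd (abs_nonneg _)
    _ = (b - a) * (|F'' a| + |F'' b|) / 8 := by
        have : (∫ x in a..b, |x - c| * ((b - x)*|F'' a| + (x - a)*|F'' b|) / (b-a)) =
            (1/(b-a)) * ∫ x in a..b, |x - c| * ((b - x)*|F'' a| + (x - a)*|F'' b|) := by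
          rw [← intervalIntegral.integral_const_mul]
          congr 1; ext x; field_simp
        rw [this, hc, key_int a b _ _ hab, abs_of_pos (by positivity),
          abs_of_nonneg]
        · field_simp; try ring
        · have hA : 0 ≤ |F'' a| := abs_nonneg _
          have hB : 0 ≤ |F'' b| := abs_nonneg _
          positivity
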